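/- arXiv:2109.10752 — 3 statements merged into one kernel-verified Lean document; each statement's English description precedes it below -/
import Mathlib

section
/- Let K(z) = z/(1-z)² be the Koebe function, which is a conformal mapping on 𝔻. For every p > 0 and α > -1 with p/(α+2) = 1/2, K does not belong to the weighted Bergman space A_α^p(𝔻). In particular, the inequality p/(α+2) < 1/2 guaranteeing membership of all conformal maps in A_α^p(𝔻) is sharp. -/
open MeasureTheory Filter Set
open scoped ENNReal Real

noncomputable section

/-- `f` is a conformal (injective holomorphic) mapping on the unit disk `𝔻`. -/
def IsConformalOnDisk (f : ℂ → ℂ) : Prop :=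
  Set.InjOn f (Metric.ball (0:ℂ) 1) ∧ DifferentiableOn ℂ f (Metric.ball (0:ℂ) 1)

/-- Membership of `f` in the weighted Bergman space `A_α^p(𝔻)`:
`∫_𝔻 |f(z)|^p (1-|z|²)^α dA(z) < ∞`. -/
def MemBergman (f : ℂ → ℂ) (p α : ℝ) : Prop :=
  (∫⁻ z in Metric.ball (0:ℂ) 1,
    ENNReal.ofReal (‖f z‖ ^ p * (1 - ‖z‖ ^ 2) ^ α)) < ⊤

/-- Membership of `f` in the Hardy space `H^p(𝔻)`:
`sup_{0<r<1} ∫₀^{2π} |f(r e^{it})|^p dt < ∞`. -/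
def MemHardy (f : ℂ → ℂ) (p : ℝ) : Prop :=
  ∃ C : ℝ, ∀ r : ℝ, 0 < r → r < 1 →
    (∫ t in (0:ℝ)..(2 * Real.pi),
      ‖f ((r : ℂ) * Complex.exp ((t : ℂ) * Complex.I))‖ ^ p) ≤ C

/-- The harmonic measure `ω_𝔻(0, E_r)` of `E_r = {ζ ∈ ∂𝔻 : |f(ζ)| > r}`, where the boundary
values of `f` are taken as radial limits. -/
def omegaE (f : ℂ → ℂ) (r : ℝ) : ℝ :=
  (volume {t : ℝ | t ∈ Set.Ico (0:ℝ) (2 * Real.pi) ∧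
      ∃ L : ℂ, Filter.Tendsto (fun s : ℝ => f ((s : ℂ) * Complex.exp ((t : ℂ) * Complex.I)))
        (nhdsWithin (1:ℝ) (Set.Iio 1)) (nhds L) ∧ r < ‖L‖}).toReal / (2 * Real.pi)

/-- The hyperbolic distance `d_𝔻(0, F_r)` from `0` to `F_r = {z ∈ 𝔻 : |f(z)| = r}` in the
unit disk (metric density `2/(1-|z|²)`), valued in `[0,∞]`, with `d = +∞` when `F_r = ∅`. -/
def hypDistF (f : ℂ → ℂ) (r : ℝ) : ℝ≥0∞ :=
  ⨅ (z : ℂ) (_ : z ∈ Metric.ball (0:ℂ) 1 ∧ ‖f z‖ = r),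
    ENNReal.ofReal (Real.log ((1 + ‖z‖) / (1 - ‖z‖)))

/-- `expNegMul c d = e^{-c·d}` for `d ∈ [0,∞]`, with the convention `e^{-c·∞} = 0`. -/
def expNegMul (c : ℝ) (d : ℝ≥0∞) : ℝ :=
  if d = ⊤ then 0 else Real.exp (-(c * d.toReal))

/-- `area(U_r)`, the Lebesgue area of `U_r = {z ∈ 𝔻 : |f(z)| > r}`. -/
def areaU (f : ℂ → ℂ) (r : ℝ) : ℝ :=
  (volume {z : ℂ | z ∈ Metric.ball (0:ℂ) 1 ∧ r < ‖f z‖}).toReal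

/-- The Bergman number `b(f) = sup{ p/(α+2) : p > 0, α > -1, f ∈ A_α^p(𝔻) }`,
valued in `[0,∞]`. -/
def bergmanNumber (f : ℂ → ℂ) : ℝ≥0∞ :=
  sSup {x : ℝ≥0∞ | ∃ p α : ℝ, 0 < p ∧ -1 < α ∧ MemBergman f p α ∧
    x = ENNReal.ofReal (p / (α + 2))}

/-- The Hardy number `h(f) = sup{ p > 0 : f ∈ H^p(𝔻) }`, valued in `[0,∞]`. -/
def hardyNumber (f : ℂ → ℂ) : ℝ≥0∞ :=
  sSup {x : ℝ≥0∞ | ∃ p : ℝ, 0 < p ∧ MemHardy f p ∧ x = ENNReal.ofReal p}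

/-- `M(t) = max_{|z| = t} |f(z)|`. -/
def maxMod (f : ℂ → ℂ) (t : ℝ) : ℝ :=
  sSup ((fun z => ‖f z‖) '' Metric.sphere (0:ℂ) t)

/-- `ψ(r) = area(f(D(0,r)))`, the Lebesgue area of the image of the disk of radius `r`. -/
def psiArea (f : ℂ → ℂ) (r : ℝ) : ℝ :=
  (volume (f '' Metric.ball (0:ℂ) r)).toReal


section KoebeAux

private lemma koebe_one_sub_ne (z : ℂ) (hz : ‖z‖ < 1) : (1:ℂ) - z ≠ 0 := by
  intro h0
  rw [sub_eq_zero] at h0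
  rw [← h0] at hz
  simp at hz

private lemma koebe_conformal' :
    Set.InjOn (fun z : ℂ => z / (1 - z) ^ 2) (Metric.ball (0:ℂ) 1) ∧
    DifferentiableOn ℂ (fun z : ℂ => z / (1 - z) ^ 2) (Metric.ball (0:ℂ) 1) := by
  constructor
  · intro z hz w hw h
    simp only [Metric.mem_ball, dist_zero_right] at hz hw
    have hz1 := koebe_one_sub_ne z hz
    have hw1 := koebe_one_sub_ne w hw
    simp only at h
    rw [div_eq_div_iff (pow_ne_zero 2 hz1) (pow_ne_zero 2 hw1)] at h
    have key : (z - w) * (1 - z * w) = 0 := by linear_combination h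
    have hzw : (1 : ℂ) - z * w ≠ 0 := by
      intro h0
      rw [sub_eq_zero] at h0
      have : ‖z * w‖ < 1 := by
        rw [norm_mul]
        calc ‖z‖ * ‖w‖ ≤ 1 * ‖w‖ := by
              exact mul_le_mul_of_nonneg_right hz.le (norm_nonneg w)
          _ < 1 := by simpa using hw
      rw [← h0] at this
      simp at this
    rcases mul_eq_zero.mp key with h1 | h1
    · exact sub_eq_zero.mp h1
    · exact absurd h1 hzw
  · intro z hz
    simp only [Metric.mem_ball, dist_zero_right] at hz
    have hz1 := koebe_one_sub_ne z hz
    exact (differentiableAt_id.div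
      (((differentiable_const (1:ℂ)).sub differentiable_id).differentiableAt.pow 2)
      (pow_ne_zero 2 hz1)).differentiableWithinAt

private lemma koebe_pointwise (p α : ℝ) (hp : 0 < p) (hpa : α = 2*p - 2) (z : ℂ)
    (hx : 1/2 ≤ z.re) (hx1 : z.re < 1) (hy0 : 0 < z.im) (hy : z.im < 1 - z.re) :
    (4:ℝ)^(-p) * min 1 ((2:ℝ)^α) * ((1 - z.re)^2)⁻¹ ≤
      ‖z / (1 - z)^2‖ ^ p * (1 - ‖z‖ ^ 2) ^ α := by
  set d : ℝ := 1 - z.re with hd_def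
  have hd : 0 < d := by simp only [hd_def]; linarith
  have habs2 : ‖z‖ ^ 2 = z.re^2 + z.im^2 := by
    rw [Complex.sq_norm, Complex.normSq_apply]; ring
  have h1z2 : ‖1 - z‖ ^ 2 = d^2 + z.im^2 := by
    rw [Complex.sq_norm, Complex.normSq_apply]
    simp [Complex.sub_re, Complex.sub_im, hd_def]
    ring
  have him2 : z.im^2 ≤ d^2 := by nlinarith
  have habsz_lb : (1:ℝ)/2 ≤ ‖z‖ := le_trans hx (Complex.re_le_norm z)
  have h1z_ub : ‖1 - z‖ ^ 2 ≤ 2 * d^2 := by rw [h1z2]; nlinarith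
  have hK : 1 / (4 * d^2) ≤ ‖z / (1 - z)^2‖ := by
    have h1zpos : (0:ℝ) < ‖1-z‖^2 := by rw [h1z2]; positivity
    rw [norm_div, norm_pow]
    rw [div_le_div_iff₀ (by positivity) h1zpos]
    calc 1 * ‖1 - z‖ ^ 2 ≤ 1 * (2 * d^2) := by nlinarith
      _ = (1/2) * (4 * d^2) := by ring
      _ ≤ ‖z‖ * (4 * d^2) := by nlinarith
  have hKp : (1 / (4 * d^2)) ^ p ≤ ‖z / (1 - z)^2‖ ^ p :=
    Real.rpow_le_rpow (by positivity) hK hp.le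
  have hA1 : d ≤ 1 - ‖z‖ ^ 2 := by rw [habs2]; nlinarith
  have hA2 : 1 - ‖z‖ ^ 2 ≤ 2 * d := by rw [habs2]; nlinarith
  have hA : min 1 ((2:ℝ)^α) * d ^ α ≤ (1 - ‖z‖ ^ 2) ^ α := by
    rcases le_or_gt 0 α with hα | hα
    · calc min 1 ((2:ℝ)^α) * d ^ α ≤ 1 * d ^ α := by
            apply mul_le_mul_of_nonneg_right (min_le_left _ _) (by positivity)
        _ = d ^ α := one_mul _
        _ ≤ (1 - ‖z‖ ^ 2) ^ α := Real.rpow_le_rpow hd.le hA1 hα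
    · calc min 1 ((2:ℝ)^α) * d ^ α ≤ (2:ℝ)^α * d ^ α := by
            apply mul_le_mul_of_nonneg_right (min_le_right _ _) (by positivity)
        _ = (2*d) ^ α := by rw [Real.mul_rpow (by norm_num) hd.le]
        _ ≤ (1 - ‖z‖ ^ 2) ^ α :=
            Real.rpow_le_rpow_of_nonpos (by linarith) hA2 hα.le
  have hcomb : (1 / (4 * d^2)) ^ p * (min 1 ((2:ℝ)^α) * d ^ α) ≤
      ‖z / (1 - z)^2‖ ^ p * (1 - ‖z‖ ^ 2) ^ α := by
    apply mul_le_mul hKp hA (by positivity) (Real.rpow_nonneg (by positivity) p)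
  refine le_trans (le_of_eq ?_) hcomb
  have e1 : (1 / (4 * d^2)) ^ p = (4:ℝ)^(-p) * (d ^ (((2:ℕ):ℝ) * (-p))) := by
    rw [one_div, Real.inv_rpow (by positivity), ← Real.rpow_neg (by positivity),
      Real.mul_rpow (by norm_num) (by positivity), ← Real.rpow_natCast d 2,
      ← Real.rpow_mul hd.le]
  have e2 : d ^ (((2:ℕ):ℝ) * (-p)) * d ^ α = (d^2)⁻¹ := by
    rw [← Real.rpow_add hd]
    have h : ((2:ℕ):ℝ) * (-p) + α = -((2:ℕ):ℝ) := by push_cast; rw [hpa]; ring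
    rw [h, Real.rpow_neg hd.le, Real.rpow_natCast]
  rw [e1, ← e2]; ring

private lemma koebe_div_top (p α : ℝ) (hp : 0 < p) (hpa : α = 2*p - 2) :
    (∫⁻ z in Metric.ball (0:ℂ) 1,
      ENNReal.ofReal (‖z / (1 - z) ^ 2‖ ^ p * (1 - ‖z‖ ^ 2) ^ α)) = ⊤ := by
  set c : ℝ := (4:ℝ)^(-p) * min 1 ((2:ℝ)^α) with hc_def
  have hc : 0 < c := by
    apply mul_pos (Real.rpow_pos_of_pos (by norm_num) _)
    exact lt_min one_pos (Real.rpow_pos_of_pos (by norm_num) _)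
  set g : ℂ → ℝ≥0∞ := fun z =>
    ENNReal.ofReal (‖z / (1 - z) ^ 2‖ ^ p * (1 - ‖z‖ ^ 2) ^ α) with hg_def
  set S : ℕ → Set ℂ := fun n => {z : ℂ | z.re ∈ Ioo (1 - (1/2:ℝ)^(n+1)) (1 - (1/2:ℝ)^(n+2)) ∧
    z.im ∈ Ioo (0:ℝ) ((1/2:ℝ)^(n+2))} with hS_def
  have hSmeas : ∀ n, MeasurableSet (S n) := fun n =>
    (Complex.measurable_re measurableSet_Ioo).inter (Complex.measurable_im measurableSet_Ioo)
  have hfacts : ∀ n, ∀ z ∈ S n, 1/2 ≤ z.re ∧ z.re < 1 ∧ 0 < z.im ∧ z.im < 1 - z.re ∧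
      1 - z.re < (1/2:ℝ)^(n+1) := by
    intro n z hz
    obtain ⟨⟨hr1, hr2⟩, hi1, hi2⟩ := hz
    have h1 : ((1:ℝ)/2)^(n+1) ≤ (1/2:ℝ)^1 :=
      pow_le_pow_of_le_one (by norm_num) (by norm_num) (by omega)
    have h2 : (0:ℝ) < (1/2:ℝ)^(n+2) := by positivity
    have h3 : ((1:ℝ)/2)^(n+2) ≤ (1/2:ℝ)^(n+1) :=
      pow_le_pow_of_le_one (by norm_num) (by norm_num) (by omega)
    norm_num at h1
    refine ⟨by linarith, by linarith, hi1, by linarith, by linarith⟩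
  have hSball : ∀ n, S n ⊆ Metric.ball (0:ℂ) 1 := by
    intro n z hz
    obtain ⟨hx, hx1, hy0, hy, _⟩ := hfacts n z hz
    have h2 : ‖z‖ ^ 2 < 1 := by
      rw [Complex.sq_norm, Complex.normSq_apply]; nlinarith
    have : ‖z‖ < 1 := by nlinarith [norm_nonneg z]
    simpa [Metric.mem_ball, dist_zero_right] using this
  have hdisj : Pairwise (Function.onFun Disjoint S) := by
    intro m n hmn
    have key : ∀ a b : ℕ, a < b → Disjoint (S a) (S b) := by
      intro a b hab
      rw [Set.disjoint_left]
      rintro z ⟨⟨_, hr2⟩, _⟩ ⟨⟨hr1', _⟩, _⟩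
      have : ((1:ℝ)/2)^(b+1) ≤ (1/2:ℝ)^(a+2) :=
        pow_le_pow_of_le_one (by norm_num) (by norm_num) (by omega)
      linarith
    rcases lt_or_gt_of_ne hmn with h | h
    · exact key m n h
    · exact (key n m h).symm
  have hvol : ∀ n, volume (S n) =
      ENNReal.ofReal ((1/2:ℝ)^(n+2)) * ENNReal.ofReal ((1/2:ℝ)^(n+2)) := by
    intro n
    have hSeq : S n = Complex.measurableEquivRealProd ⁻¹'
        (Ioo (1 - (1/2:ℝ)^(n+1)) (1 - (1/2:ℝ)^(n+2)) ×ˢ Ioo (0:ℝ) ((1/2:ℝ)^(n+2))) := by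
      ext z
      simp [hS_def, Complex.measurableEquivRealProd_apply, Set.mem_prod]
    rw [hSeq, Complex.volume_preserving_equiv_real_prod.measure_preimage
      ((measurableSet_Ioo.prod measurableSet_Ioo).nullMeasurableSet),
      Measure.volume_eq_prod, Measure.prod_prod, Real.volume_Ioo, Real.volume_Ioo]
    congr 2
    · rw [pow_succ ((1:ℝ)/2) (n+1)]; ring
    · ring
  have hpiece : ∀ n, ENNReal.ofReal (c/4) ≤ ∫⁻ z in S n, g z := by
    intro n
    have ha : (0:ℝ) < (1/2:ℝ)^(n+1) := by positivity
    have hb : (0:ℝ) < (1/2:ℝ)^(n+2) := by positivity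
    have hlow : ∀ z ∈ S n, ENNReal.ofReal (c * (((1/2:ℝ)^(n+1))^2)⁻¹) ≤ g z := by
      intro z hz
      obtain ⟨hx, hx1, hy0, hy, hlt⟩ := hfacts n z hz
      apply ENNReal.ofReal_le_ofReal
      have hd : (0:ℝ) < 1 - z.re := by linarith
      refine le_trans ?_ (koebe_pointwise p α hp hpa z hx hx1 hy0 hy)
      rw [hc_def, mul_assoc, mul_assoc]
      apply mul_le_mul_of_nonneg_left ?_ (Real.rpow_nonneg (by norm_num) _)
      apply mul_le_mul_of_nonneg_left ?_ (le_min zero_le_one (Real.rpow_nonneg (by norm_num) _))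
      apply inv_anti₀ (by positivity)
      nlinarith
    have key : c * (((1/2:ℝ)^(n+1))^2)⁻¹ * ((1/2:ℝ)^(n+2) * (1/2:ℝ)^(n+2)) = c/4 := by
      rw [pow_succ ((1:ℝ)/2) (n+1)]
      field_simp
      ring
    calc ENNReal.ofReal (c/4)
        = ENNReal.ofReal (c * (((1/2:ℝ)^(n+1))^2)⁻¹) * volume (S n) := by
          rw [hvol n, ← ENNReal.ofReal_mul (by positivity), ← ENNReal.ofReal_mul (by positivity)]
          congr 1
          rw [← key]
      _ = ∫⁻ _ in S n, ENNReal.ofReal (c * (((1/2:ℝ)^(n+1))^2)⁻¹) := (setLIntegral_const _ _).symm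
      _ ≤ ∫⁻ z in S n, g z := setLIntegral_mono' (hSmeas n) hlow
  have htop : (⊤ : ℝ≥0∞) ≤ ∫⁻ z in Metric.ball (0:ℂ) 1, g z := by
    calc (⊤ : ℝ≥0∞) = ∑' _ : ℕ, ENNReal.ofReal (c/4) :=
          (ENNReal.tsum_const_eq_top_of_ne_zero (by positivity)).symm
      _ ≤ ∑' n, ∫⁻ z in S n, g z := ENNReal.tsum_le_tsum hpiece
      _ = ∫⁻ z in ⋃ n, S n, g z := (lintegral_iUnion hSmeas hdisj g).symm
      _ ≤ ∫⁻ z in Metric.ball (0:ℂ) 1, g z := lintegral_mono_set (iUnion_subset hSball)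
  exact top_le_iff.mp htop

end KoebeAux

/-- the Koebe function `K(z) = z/(1-z)²` is conformal on `𝔻` and, for every
`p > 0`, `α > -1` with `p/(α+2) = 1/2`, it does not belong to `A_α^p(𝔻)`; hence the
bound `p/(α+2) < 1/2` is sharp. -/
theorem koebe_not_memBergman_at_half :
    IsConformalOnDisk (fun z : ℂ => z / (1 - z) ^ 2) ∧
      ∀ p α : ℝ, 0 < p → -1 < α → p / (α + 2) = 1 / 2 →
        ¬ MemBergman (fun z : ℂ => z / (1 - z) ^ 2) p α := by
  refine ⟨⟨koebe_conformal'.1, koebe_conformal'.2⟩, ?_⟩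
  intro p α hp hα hhalf hmem
  have hα2 : (0:ℝ) < α + 2 := by linarith
  have hpa : α = 2 * p - 2 := by
    rw [div_eq_div_iff hα2.ne' (by norm_num)] at hhalf
    linarith
  rw [MemBergman] at hmem
  rw [koebe_div_top p α hp hpa] at hmem
  exact lt_irrefl _ hmem
end
end

section
/- Let p > 0 and α > -1, and suppose f is a conformal mapping on 𝔻 belonging to A_α^p(𝔻). Then (1) lim_{r→1⁻} (1-r)·M(r)^{p/(α+2)} = 0, and (2) lim_{r→1⁻} (1-r)·ψ(r)^{p/(2(α+2))} = 0. -/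
open MeasureTheory Filter Set
open scoped ENNReal Real
open Metric

noncomputable section

lemma circle_mean_ge {F : ℂ → ℂ} {c : ℂ} {R ρ : ℝ} (hρ : 0 < ρ) (hρR : ρ < R)
    (hF : DifferentiableOn ℂ F (ball c R)) :
    2 * Real.pi * ‖F c‖ ≤
      ∫ θ in (0:ℝ)..(2 * Real.pi), ‖F (circleMap c ρ θ)‖ := by
  have hsub : closedBall c ρ ⊆ ball c R := closedBall_subset_ball hρR
  have hc : ContinuousOn F (closedBall c ρ) := (hF.mono hsub).continuousOn
  have hd : ∀ z ∈ ball c ρ \ (∅ : Set ℂ), DifferentiableAt ℂ F z := by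
    intro z hz
    exact hF.differentiableAt (isOpen_ball.mem_nhds (hsub (ball_subset_closedBall hz.1)))
  have key := Complex.circleIntegral_sub_center_inv_smul_of_differentiable_on_off_countable
    hρ Set.countable_empty hc hd
  -- unfold circle integral
  rw [circleIntegral] at key
  have h1 : ∀ θ : ℝ, (deriv (circleMap c ρ) θ) • ((circleMap c ρ θ - c)⁻¹ • F (circleMap c ρ θ))
      = Complex.I • F (circleMap c ρ θ) := by
    intro θ
    rw [deriv_circleMap, circleMap_sub_center]
    have hne : circleMap 0 ρ θ ≠ 0 := by simpa using circleMap_ne_center (c := (0:ℂ)) hρ.ne' (θ := θ)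
    simp only [smul_eq_mul]
    field_simp
  simp only [h1] at key
  rw [intervalIntegral.integral_smul] at key
  have hI : (Complex.I : ℂ) ≠ 0 := Complex.I_ne_zero
  have key2 : (∫ θ in (0:ℝ)..(2 * Real.pi), F (circleMap c ρ θ)) = (2 * Real.pi : ℝ) • F c := by
    have : (2 * ↑Real.pi * Complex.I : ℂ) • F c = Complex.I • ((2 * Real.pi : ℝ) • F c) := by
      simp only [smul_eq_mul, Complex.real_smul]
      push_cast
      ring
    rw [this] at key
    exact smul_right_injective ℂ hI key
  calc 2 * Real.pi * ‖F c‖ ≤ ‖∫ θ in (0:ℝ)..(2 * Real.pi), F (circleMap c ρ θ)‖ := by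
        rw [key2, norm_smul]
        simp [abs_of_nonneg Real.pi_nonneg]
    _ ≤ _ := by
        simpa using intervalIntegral.norm_integral_le_integral_norm
          (f := fun θ => F (circleMap c ρ θ)) (μ := volume) (by positivity)

lemma area_mean_ge {F : ℂ → ℂ} {c : ℂ} {R δ : ℝ} (hδ : 0 < δ) (hδR : δ < R)
    (hF : DifferentiableOn ℂ F (ball c R)) :
    Real.pi * δ ^ 2 * ‖F c‖ ≤
      ∫ w in ball c δ, ‖F w‖ := by
  have hcont : ContinuousOn F (closedBall c δ) :=
    (hF.mono (closedBall_subset_ball hδR)).continuousOn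
  set φ : ℝ × ℝ → ℝ := fun q => q.1 * ‖F (c + Complex.polarCoord.symm q)‖ with hφ
  have habs : ∀ q : ℝ × ℝ, ‖Complex.polarCoord.symm q‖ = |q.1| :=
    Complex.norm_polarCoord_symm
  have hmapsto : ∀ q : ℝ × ℝ, q.1 ∈ Icc 0 δ → c + Complex.polarCoord.symm q ∈ closedBall c δ := by
    intro q hq
    rw [mem_closedBall]
    have h1 : dist (c + Complex.polarCoord.symm q) c = ‖Complex.polarCoord.symm q‖ := by
      simp [Complex.dist_eq]
    rw [h1, habs, abs_of_nonneg hq.1]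
    exact hq.2
  have hσcont : Continuous (fun q : ℝ × ℝ => Complex.polarCoord.symm q) := by
    have : (fun q : ℝ × ℝ => Complex.polarCoord.symm q)
        = fun q : ℝ × ℝ => (q.1 : ℂ) * (Real.cos q.2 + Real.sin q.2 * Complex.I) := by
      funext q; exact Complex.polarCoord_symm_apply q
    rw [this]; fun_prop
  have hφcont : ContinuousOn φ (Icc 0 δ ×ˢ Icc (-Real.pi) Real.pi) := by
    apply ContinuousOn.mul continuous_fst.continuousOn
    apply continuous_norm.comp_continuousOn
    apply hcont.comp ((continuous_const.add hσcont).continuousOn)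
    intro q hq
    exact hmapsto q (mem_prod.1 hq).1
  have hφint : IntegrableOn φ (Ioo 0 δ ×ˢ Ioo (-Real.pi) Real.pi) := by
    apply (hφcont.integrableOn_compact (isCompact_Icc.prod isCompact_Icc)).mono_set
    exact prod_mono Ioo_subset_Icc_self Ioo_subset_Icc_self
  -- the indicator function
  set g : ℂ → ℝ := (ball (0:ℂ) δ).indicator (fun w => ‖F (c + w)‖) with hg
  -- step 1 : whole-plane integral of g equals the ball integral
  have step1 : ∫ w, g w = ∫ w in ball c δ, ‖F w‖ := by
    have h1 : ∀ w : ℂ, g w = (ball c δ).indicator (fun u => ‖F u‖) (c + w) := by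
      intro w
      by_cases hw : w ∈ ball (0:ℂ) δ
      · have : c + w ∈ ball c δ := by
          rw [mem_ball] at hw ⊢; simpa [Complex.dist_eq] using hw
        simp [hg, indicator_of_mem hw, indicator_of_mem this]
      · have : c + w ∉ ball c δ := by
          rw [mem_ball] at hw ⊢; simpa [Complex.dist_eq] using hw
        simp [hg, indicator_of_notMem hw, indicator_of_notMem this]
    calc ∫ w, g w = ∫ w, (ball c δ).indicator (fun u => ‖F u‖) (c + w) := by
          simp_rw [h1]
      _ = ∫ w, (ball c δ).indicator (fun u => ‖F u‖) w :=
          integral_add_left_eq_self _ c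
      _ = ∫ w in ball c δ, ‖F w‖ := integral_indicator measurableSet_ball
  -- step 2 : polar coordinates
  have step2 : (∫ p in polarCoord.target, p.1 • g (Complex.polarCoord.symm p)) = ∫ p, g p :=
    Complex.integral_comp_polarCoord_symm g
  -- step 3 : rewrite target integral as integral over the open rectangle
  set S : Set (ℝ × ℝ) := Ioo 0 δ ×ˢ Ioo (-Real.pi) Real.pi with hS
  have hSsub : S ⊆ polarCoord.target := by
    rw [polarCoord_target]
    exact prod_mono Ioo_subset_Ioi_self subset_rfl
  have step3 : (∫ p in polarCoord.target, p.1 • g (Complex.polarCoord.symm p))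
      = ∫ p in S, φ p := by
    have h1 : ∀ p ∈ polarCoord.target, p.1 • g (Complex.polarCoord.symm p)
        = S.indicator φ p := by
      rintro ⟨ρ, θ⟩ hp
      rw [polarCoord_target] at hp
      obtain ⟨hρ : ρ ∈ Ioi (0:ℝ), hθ⟩ := mem_prod.1 hp
      by_cases hρδ : ρ < δ
      · have hmem : Complex.polarCoord.symm (ρ, θ) ∈ ball (0:ℂ) δ := by
          rw [mem_ball, Complex.dist_eq, sub_zero, habs]
          rw [abs_of_nonneg (le_of_lt hρ)]; exact hρδ
        have hmemS : (ρ, θ) ∈ S := by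
          exact ⟨⟨hρ, hρδ⟩, hθ⟩
        rw [indicator_of_mem hmemS, hg]
        simp only [indicator_of_mem hmem, smul_eq_mul, hφ]
      · have hmem : Complex.polarCoord.symm (ρ, θ) ∉ ball (0:ℂ) δ := by
          rw [mem_ball, Complex.dist_eq, sub_zero, habs, abs_of_nonneg (le_of_lt hρ)]
          exact fun h => hρδ h
        have hmemS : (ρ, θ) ∉ S := by
          rintro ⟨⟨_, h2⟩, _⟩; exact hρδ h2
        rw [indicator_of_notMem hmemS, hg]
        simp only [indicator_of_notMem hmem, smul_zero]
    calc (∫ p in polarCoord.target, p.1 • g (Complex.polarCoord.symm p))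
        = ∫ p in polarCoord.target, S.indicator φ p :=
          setIntegral_congr_fun polarCoord.open_target.measurableSet h1
      _ = ∫ p in polarCoord.target ∩ S, φ p :=
          setIntegral_indicator (measurableSet_Ioo.prod measurableSet_Ioo)
      _ = ∫ p in S, φ p := by rw [inter_eq_self_of_subset_right hSsub]
  -- step 4 : Fubini and the circle estimate
  have step4 : Real.pi * δ ^ 2 * ‖F c‖ ≤ ∫ p in S, φ p := by
    have hfub : ∫ p in S, φ p
        = ∫ ρ in Ioo (0:ℝ) δ, ∫ θ in Ioo (-Real.pi) Real.pi, φ (ρ, θ) := by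
      rw [hS, MeasureTheory.Measure.volume_eq_prod]
      rw [Measure.volume_eq_prod] at hφint
      exact setIntegral_prod φ hφint
    rw [hfub]
    -- inner estimate
    have hinner : ∀ ρ ∈ Ioo (0:ℝ) δ,
        ρ * (2 * Real.pi * ‖F c‖) ≤ ∫ θ in Ioo (-Real.pi) Real.pi, φ (ρ, θ) := by
      intro ρ hρ
      have hψ : ∀ θ : ℝ, φ (ρ, θ) = ρ * ‖F (circleMap c ρ θ)‖ := by
        intro θ
        have : c + Complex.polarCoord.symm (ρ, θ) = circleMap c ρ θ := by
          rw [Complex.polarCoord_symm_apply, circleMap, Complex.exp_mul_I]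
          push_cast; ring
        rw [hφ]; dsimp only; rw [this]
      simp_rw [hψ]
      rw [← MeasureTheory.integral_Ioc_eq_integral_Ioo,
        ← intervalIntegral.integral_of_le (by linarith [Real.pi_pos] : -Real.pi ≤ Real.pi)]
      rw [intervalIntegral.integral_const_mul]
      have hper : Function.Periodic (fun θ => ‖F (circleMap c ρ θ)‖) (2 * Real.pi) :=
        (periodic_circleMap c ρ).comp fun z => ‖F z‖
      have hshift : (∫ θ in (-Real.pi)..Real.pi, ‖F (circleMap c ρ θ)‖)
          = ∫ θ in (0:ℝ)..(2 * Real.pi), ‖F (circleMap c ρ θ)‖ := by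
        have := hper.intervalIntegral_add_eq (-Real.pi) 0
        simpa [ (by ring : -Real.pi + 2 * Real.pi = Real.pi)] using this
      rw [hshift]
      have := circle_mean_ge hρ.1 (lt_trans hρ.2 hδR) hF
      have hρpos := hρ.1
      nlinarith [this]
    -- outer estimate
    have hlhs_int : IntegrableOn (fun ρ => ρ * (2 * Real.pi * ‖F c‖)) (Ioo 0 δ) := by
      have h1 : IntegrableOn (fun ρ : ℝ => ρ * (2 * Real.pi * ‖F c‖)) (Icc 0 δ) :=
        (continuous_id.mul continuous_const).continuousOn.integrableOn_compact isCompact_Icc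
      exact h1.mono_set Ioo_subset_Icc_self
    have hrhs_int : IntegrableOn (fun ρ => ∫ θ in Ioo (-Real.pi) Real.pi, φ (ρ, θ)) (Ioo 0 δ) := by
      have h2 : Integrable φ
          ((volume.restrict (Ioo (0:ℝ) δ)).prod (volume.restrict (Ioo (-Real.pi) Real.pi))) := by
        rw [Measure.prod_restrict]
        rw [Measure.volume_eq_prod, hS] at hφint
        exact hφint
      exact h2.integral_prod_left
    have hmono := setIntegral_mono_on hlhs_int hrhs_int measurableSet_Ioo hinner
    have hid : ∫ ρ in Ioo (0:ℝ) δ, ρ * (2 * Real.pi * ‖F c‖)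
        = Real.pi * δ ^ 2 * ‖F c‖ := by
      rw [integral_mul_const]
      rw [← MeasureTheory.integral_Ioc_eq_integral_Ioo,
        ← intervalIntegral.integral_of_le hδ.le]
      rw [integral_id]
      ring
    linarith [hmono, hid.ge]
  calc Real.pi * δ ^ 2 * ‖F c‖ ≤ ∫ p in S, φ p := step4
    _ = ∫ p, g p := by rw [← step3, step2]
    _ = ∫ w in ball c δ, ‖F w‖ := step1

lemma submean_le_one {F : ℂ → ℂ} {c : ℂ} {R δ p : ℝ} (hδ : 0 < δ) (hδR : δ < R)
    (hF : DifferentiableOn ℂ F (ball c R)) (hp : 0 < p) (hp1 : p ≤ 1) :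
    ‖F c‖ ^ p ≤
      (2 ^ (2 / p) / Real.pi) / δ ^ 2 * ∫ w in ball c δ, ‖F w‖ ^ p := by
  have hπ := Real.pi_pos
  have hcont : ContinuousOn F (closedBall c δ) :=
    (hF.mono (closedBall_subset_ball hδR)).continuousOn
  have habscont : ContinuousOn (fun w => ‖F w‖) (closedBall c δ) :=
    continuous_norm.comp_continuousOn hcont
  have hpcont : ContinuousOn (fun w => ‖F w‖ ^ p) (closedBall c δ) :=
    habscont.rpow_const (fun x _ => Or.inr hp.le)
  set I : ℝ := ∫ w in ball c δ, ‖F w‖ ^ p with hI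
  have hI0 : 0 ≤ I :=
    setIntegral_nonneg measurableSet_ball (fun w _ => Real.rpow_nonneg (norm_nonneg _) _)
  have hIint : IntegrableOn (fun w => ‖F w‖ ^ p) (closedBall c δ) :=
    hpcont.integrableOn_compact (isCompact_closedBall _ _)
  have habsint : IntegrableOn (fun w => ‖F w‖) (closedBall c δ) :=
    habscont.integrableOn_compact (isCompact_closedBall _ _)
  obtain ⟨M, hM⟩ : ∃ M, ∀ w ∈ closedBall c δ, ‖F w‖ ≤ M := by
    obtain ⟨M, hM⟩ := (isCompact_closedBall c δ).exists_bound_of_continuousOn hcont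
    exact ⟨M, fun w hw => by simpa using hM w hw⟩
  -- the set of weighted values
  set T : Set ℝ := (fun w => (δ - dist w c) ^ (2 / p) * ‖F w‖) '' (ball c δ) with hT
  have hTne : T.Nonempty := ⟨_, c, mem_ball_self hδ, rfl⟩
  have hTbdd : BddAbove T := by
    refine ⟨δ ^ (2 / p) * M, ?_⟩
    rintro x ⟨w, hw, rfl⟩
    have h1 : (0:ℝ) ≤ δ - dist w c := by
      have := (mem_ball.1 hw); linarith [dist_nonneg (x := w) (y := c)]
    apply mul_le_mul
    · exact Real.rpow_le_rpow h1 (by linarith [mem_ball.1 hw, dist_nonneg (x := w) (y := c)])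
        (by positivity)
    · exact hM w (ball_subset_closedBall hw)
    · exact norm_nonneg _
    · positivity
  set K : ℝ := sSup T with hK
  have hKc : δ ^ (2 / p) * ‖F c‖ ≤ K := by
    apply le_csSup hTbdd
    exact ⟨c, mem_ball_self hδ, by simp⟩
  have hK0 : 0 ≤ K := le_trans (by positivity) hKc
  -- main pointwise estimate
  have hmain : ∀ w ∈ ball c δ,
      (δ - dist w c) ^ (2 / p) * ‖F w‖ ≤ 2 ^ (2 / p) / Real.pi * K ^ (1 - p) * I := by
    intro w hw
    set d : ℝ := δ - dist w c with hd
    have hd0 : 0 < d := by simp [hd]; exact mem_ball.1 hw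
    set ρ : ℝ := d / 2 with hρ
    have hρ0 : 0 < ρ := by positivity
    have hρd : ρ < d := by simp [hρ]; linarith
    -- mean value on ball w ρ
    have hsub : ball w d ⊆ ball c R := by
      apply ball_subset_ball'
      simp only [hd]
      have := dist_nonneg (x := w) (y := c)
      linarith
    have hmv := area_mean_ge hρ0 hρd (hF.mono hsub)
    -- subset facts
    have hballsub : ball w ρ ⊆ ball c δ := by
      intro u hu
      rw [mem_ball] at hu ⊢
      calc dist u c ≤ dist u w + dist w c := dist_triangle _ _ _
        _ < ρ + dist w c := by linarith
        _ ≤ δ := by simp only [hd] at hρd ⊢; linarith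
    -- pointwise bound on ball w ρ
    have hpt : ∀ u ∈ ball w ρ, ‖F u‖ ≤
        ‖F u‖ ^ p * (K / ρ ^ (2 / p)) ^ (1 - p) := by
      intro u hu
      have huδ : u ∈ ball c δ := hballsub hu
      have hρle : ρ ≤ δ - dist u c := by
        have h1 : dist u c ≤ dist u w + dist w c := dist_triangle _ _ _
        have h2 : dist u w < ρ := mem_ball.1 hu
        simp only [hd] at hρd ⊢
        linarith
      have hle1 : ρ ^ (2 / p) * ‖F u‖ ≤ K := by
        calc ρ ^ (2 / p) * ‖F u‖
            ≤ (δ - dist u c) ^ (2 / p) * ‖F u‖ := by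
              apply mul_le_mul_of_nonneg_right _ (norm_nonneg _)
              exact Real.rpow_le_rpow hρ0.le hρle (by positivity)
          _ ≤ K := le_csSup hTbdd ⟨u, huδ, rfl⟩
      have hFu : ‖F u‖ ≤ K / ρ ^ (2 / p) := by
        rw [le_div_iff₀ (Real.rpow_pos_of_pos hρ0 _)]
        linarith [hle1]
      calc ‖F u‖ = ‖F u‖ ^ p * ‖F u‖ ^ (1 - p) := by
            rw [← Real.rpow_add' (norm_nonneg _) (by norm_num)]
            norm_num
        _ ≤ ‖F u‖ ^ p * (K / ρ ^ (2 / p)) ^ (1 - p) := by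
            apply mul_le_mul_of_nonneg_left _ (Real.rpow_nonneg (norm_nonneg _) _)
            exact Real.rpow_le_rpow (norm_nonneg _) hFu (by linarith)
    -- integrate the pointwise bound
    have hint1 : ∫ u in ball w ρ, ‖F u‖ ≤
        (∫ u in ball w ρ, ‖F u‖ ^ p) * (K / ρ ^ (2 / p)) ^ (1 - p) := by
      rw [← integral_mul_const]
      apply setIntegral_mono_on
      · exact habsint.mono_set (hballsub.trans ball_subset_closedBall)
      · exact (hIint.mono_set (hballsub.trans ball_subset_closedBall)).mul_const _
      · exact measurableSet_ball
      · exact hpt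
    have hint2 : ∫ u in ball w ρ, ‖F u‖ ^ p ≤ I := by
      apply setIntegral_mono_set (hIint.mono_set ball_subset_closedBall)
      · exact ae_of_all _ (fun u => Real.rpow_nonneg (norm_nonneg _) _)
      · exact (hballsub.trans subset_rfl).eventuallyLE
    -- combine
    have hC'0 : (0:ℝ) ≤ (K / ρ ^ (2 / p)) ^ (1 - p) := Real.rpow_nonneg (by positivity) _
    have hcomb : Real.pi * ρ ^ 2 * ‖F w‖ ≤ (K / ρ ^ (2 / p)) ^ (1 - p) * I := by
      calc Real.pi * ρ ^ 2 * ‖F w‖ ≤ ∫ u in ball w ρ, ‖F u‖ := hmv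
        _ ≤ (∫ u in ball w ρ, ‖F u‖ ^ p) * (K / ρ ^ (2 / p)) ^ (1 - p) := hint1
        _ ≤ I * (K / ρ ^ (2 / p)) ^ (1 - p) := by
            apply mul_le_mul_of_nonneg_right hint2 hC'0
        _ = (K / ρ ^ (2 / p)) ^ (1 - p) * I := by ring
    -- now the rpow algebra
    have hFw : ‖F w‖ ≤ (K / ρ ^ (2 / p)) ^ (1 - p) * I / (Real.pi * ρ ^ 2) := by
      rw [le_div_iff₀ (by positivity)]
      linarith [hcomb]
    have hdρ : d = 2 * ρ := by simp [hρ]; ring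
    calc d ^ (2 / p) * ‖F w‖
        ≤ d ^ (2 / p) * ((K / ρ ^ (2 / p)) ^ (1 - p) * I / (Real.pi * ρ ^ 2)) := by
          apply mul_le_mul_of_nonneg_left hFw (Real.rpow_nonneg hd0.le _)
      _ = 2 ^ (2 / p) / Real.pi * K ^ (1 - p) * I := by
          have e1 : d ^ (2/p) = 2 ^ (2/p) * ρ ^ (2/p) := by
            rw [hdρ, Real.mul_rpow (by norm_num) hρ0.le]
          have e2 : (K / ρ ^ (2/p)) ^ (1-p) = K ^ (1-p) / ρ ^ (2/p*(1-p)) := by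
            rw [Real.div_rpow hK0 (Real.rpow_pos_of_pos hρ0 _).le, ← Real.rpow_mul hρ0.le]
          have e3 : (ρ:ℝ) ^ (2:ℕ) = ρ ^ (2:ℝ) := by
            rw [← Real.rpow_natCast ρ 2]; norm_num
          have e4 : ρ ^ (2/p) = ρ ^ (2/p*(1-p)) * ρ ^ (2:ℝ) := by
            rw [← Real.rpow_add hρ0]; congr 1; field_simp; ring
          rw [e1, e2, e3, e4]
          have ha : ρ ^ (2/p*(1-p)) ≠ 0 := (Real.rpow_pos_of_pos hρ0 _).ne'
          have hb : ρ ^ ((2:ℝ)) ≠ 0 := (Real.rpow_pos_of_pos hρ0 _).ne'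
          field_simp
  -- conclude via the sSup inequality
  have hcsSup : K ≤ 2 ^ (2 / p) / Real.pi * K ^ (1 - p) * I := by
    apply csSup_le hTne
    rintro x ⟨w, hw, rfl⟩
    exact hmain w hw
  rcases eq_or_lt_of_le (norm_nonneg (F c)) with hFc | hFc
  · -- |F c| = 0
    rw [← hFc, Real.zero_rpow hp.ne']
    have : (0:ℝ) ≤ 2 ^ (2/p) / Real.pi / δ ^ 2 * I := by positivity
    linarith
  · -- |F c| > 0
    have hKpos : 0 < K := lt_of_lt_of_le (by positivity) hKc
    have hKp : K ^ p ≤ 2 ^ (2 / p) / Real.pi * I := by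
      have h1 : K ^ (1 - p) * K ^ p ≤ 2 ^ (2 / p) / Real.pi * K ^ (1 - p) * I := by
        rw [← Real.rpow_add hKpos]
        norm_num
        linarith [hcsSup]
      have h2 : 0 < K ^ (1 - p) := Real.rpow_pos_of_pos hKpos _
      calc K ^ p = K ^ (1-p) * K ^ p / K ^ (1-p) := by field_simp
        _ ≤ 2 ^ (2 / p) / Real.pi * K ^ (1 - p) * I / K ^ (1-p) := by
            exact div_le_div_of_nonneg_right h1 h2.le |>.trans_eq rfl
        _ = 2 ^ (2 / p) / Real.pi * I := by field_simp
    have hFcK : ‖F c‖ ≤ K / δ ^ (2/p) := by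
      rw [le_div_iff₀ (Real.rpow_pos_of_pos hδ _)]
      linarith [hKc]
    calc ‖F c‖ ^ p ≤ (K / δ ^ (2/p)) ^ p :=
          Real.rpow_le_rpow (norm_nonneg _) hFcK hp.le
      _ = K ^ p / δ ^ 2 := by
          rw [Real.div_rpow hKpos.le (Real.rpow_pos_of_pos hδ _).le,
            ← Real.rpow_mul hδ.le]
          congr 1
          · rw [div_mul_cancel₀ _ hp.ne']
            rw [← Real.rpow_natCast δ 2]; norm_num
      _ ≤ (2 ^ (2 / p) / Real.pi) / δ ^ 2 * I := by
          rw [div_le_iff₀ (by positivity : (0:ℝ) < δ ^ 2)] at *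
          calc K ^ p ≤ 2 ^ (2 / p) / Real.pi * I := hKp
            _ = 2 ^ (2 / p) / Real.pi / δ ^ 2 * I * δ ^ 2 := by field_simp

lemma submean (p : ℝ) (hp : 0 < p) : ∃ C : ℝ, 0 < C ∧
    ∀ (f : ℂ → ℂ) (c : ℂ) (R δ : ℝ), 0 < δ → δ < R → DifferentiableOn ℂ f (ball c R) →
      ‖f c‖ ^ p ≤ C / δ ^ 2 * ∫ w in ball c δ, ‖f w‖ ^ p := by
  set n : ℕ := ⌈p⌉₊ with hn
  have hn0 : 0 < n := Nat.ceil_pos.2 hp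
  have hnR : (0:ℝ) < (n:ℝ) := by exact_mod_cast hn0
  set q : ℝ := p / n with hq
  have hq0 : 0 < q := div_pos hp hnR
  have hq1 : q ≤ 1 := by
    rw [hq, div_le_one hnR]
    exact Nat.le_ceil p
  refine ⟨2 ^ (2 / q) / Real.pi, by positivity, ?_⟩
  intro f c R δ hδ hδR hF
  have hG : DifferentiableOn ℂ (fun w => (f w) ^ n) (ball c R) := hF.pow n
  have key : ∀ w : ℂ, ‖(f w) ^ n‖ ^ q = ‖f w‖ ^ p := by
    intro w
    rw [norm_pow, ← Real.rpow_natCast (‖f w‖) n, ← Real.rpow_mul (norm_nonneg _)]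
    congr 1
    rw [hq]
    field_simp
  have := submean_le_one hδ hδR hG hq0 hq1
  simp_rw [key] at this
  exact this

lemma tail_tendsto {f : ℂ → ℂ} (hf : DifferentiableOn ℂ f (ball (0:ℂ) 1)) {p α : ℝ}
    (hp : 0 < p)
    (htot : (∫⁻ z in ball (0:ℂ) 1,
      ENNReal.ofReal (‖f z‖ ^ p * (1 - ‖z‖ ^ 2) ^ α)) < ⊤) :
    Tendsto (fun s : ℝ => ∫⁻ z in ball (0:ℂ) 1 \ closedBall (0:ℂ) s,
        ENNReal.ofReal (‖f z‖ ^ p * (1 - ‖z‖ ^ 2) ^ α))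
      (nhdsWithin (1:ℝ) (Set.Iio 1)) (nhds 0) := by
  set h : ℂ → ℝ := fun z => ‖f z‖ ^ p * (1 - ‖z‖ ^ 2) ^ α with hh
  set H : ℂ → ℝ≥0∞ := fun z => ENNReal.ofReal (h z) with hH
  have hcont : ContinuousOn h (ball (0:ℂ) 1) := by
    apply ContinuousOn.mul
    · exact (continuous_norm.comp_continuousOn hf.continuousOn).rpow_const
        (fun x _ => Or.inr hp.le)
    · apply ContinuousOn.rpow_const
      · exact (continuous_const.sub (continuous_norm.pow 2)).continuousOn
      · intro x hx
        left
        have : ‖x‖ < 1 := by simpa [Complex.dist_eq] using mem_ball.1 hx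
        nlinarith [norm_nonneg x]
  have hmeas : AEMeasurable H (volume.restrict (ball (0:ℂ) 1)) :=
    (hcont.aemeasurable measurableSet_ball).ennreal_ofReal
  set H' : ℂ → ℝ≥0∞ := hmeas.mk H with hH'
  have hH'm : Measurable H' := hmeas.measurable_mk
  have hae : H =ᵐ[volume.restrict (ball (0:ℂ) 1)] H' := hmeas.ae_eq_mk
  set μ : Measure ℂ := (volume.restrict (ball (0:ℂ) 1)).withDensity H' with hμ
  have hμs : ∀ s : Set ℂ, MeasurableSet s → s ⊆ ball (0:ℂ) 1 →
      μ s = ∫⁻ z in s, H z := by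
    intro s hs hsub
    rw [hμ, withDensity_apply _ hs, Measure.restrict_restrict hs,
      inter_eq_self_of_subset_left hsub]
    apply lintegral_congr_ae
    have h2 : H =ᶠ[ae (volume.restrict s)] H' := ae_restrict_of_ae_restrict_of_subset hsub hae
    exact h2.symm
  have hfin : μ univ < ⊤ := by
    rw [hμ, withDensity_apply _ MeasurableSet.univ, Measure.restrict_univ]
    calc ∫⁻ z, H' z ∂(volume.restrict (ball (0:ℂ) 1))
        = ∫⁻ z, H z ∂(volume.restrict (ball (0:ℂ) 1)) := (lintegral_congr_ae hae).symm
      _ < ⊤ := htot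
  set E : ℝ → Set ℂ := fun s => ball (0:ℂ) 1 \ closedBall (0:ℂ) s with hE
  have hEmeas : ∀ s, MeasurableSet (E s) := fun s =>
    measurableSet_ball.diff measurableSet_closedBall
  have hEsub : ∀ s, E s ⊆ ball (0:ℂ) 1 := fun s => diff_subset
  have hEanti : ∀ s t : ℝ, s ≤ t → E t ⊆ E s := fun s t hst =>
    diff_subset_diff_right (closedBall_subset_closedBall hst)
  set u : ℕ → ℝ := fun n => 1 - 1 / (n + 1) with hu
  have hu1 : ∀ n, u n < 1 := by
    intro n
    have : (0:ℝ) < 1 / (n + 1) := by positivity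
    simp [hu]; linarith
  have hiInter : (⋂ n, E (u n)) = ∅ := by
    ext z
    simp only [mem_iInter, mem_empty_iff_false, iff_false, not_forall]
    by_cases hz : z ∈ ball (0:ℂ) 1
    · have hz1 : ‖z‖ < 1 := by simpa [Complex.dist_eq] using mem_ball.1 hz
      obtain ⟨n, hn⟩ := exists_nat_one_div_lt (by linarith : (0:ℝ) < 1 - ‖z‖)
      refine ⟨n, fun h => ?_⟩
      have : z ∉ closedBall (0:ℂ) (u n) := h.2
      rw [mem_closedBall, Complex.dist_eq, sub_zero] at this
      push_neg at this
      rw [hu] at this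
      simp only at this
      linarith
    · exact ⟨0, fun h => hz h.1⟩
  have htm : Tendsto (fun n => μ (E (u n))) atTop (nhds 0) := by
    have h1 := MeasureTheory.tendsto_measure_iInter_atTop (μ := μ) (s := fun n => E (u n))
      (fun n => (hEmeas (u n)).nullMeasurableSet)
      (fun m n hmn => hEanti (u m) (u n) (by
        have : (1:ℝ) / (n + 1) ≤ 1 / (m + 1) := by
          apply one_div_le_one_div_of_le (by positivity)
          push_cast; exact_mod_cast add_le_add_left (Nat.cast_le.2 hmn) 1
        simp only [hu]; linarith))
      ⟨0, (lt_of_le_of_lt (measure_mono (subset_univ _)) hfin).ne⟩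
    rwa [hiInter, measure_empty] at h1
  rw [ENNReal.tendsto_nhds_zero]
  intro ε hε
  have hε' : (0:ℝ≥0∞) < ε := hε
  obtain ⟨n₀, hn₀⟩ : ∃ n, μ (E (u n)) < ε := by
    rcases (htm.eventually_lt_const hε').exists with ⟨n, hn⟩
    exact ⟨n, hn⟩
  have hmem : Ioo (u n₀) 1 ∈ nhdsWithin (1:ℝ) (Set.Iio 1) :=
    Ioo_mem_nhdsLT_of_mem ⟨hu1 n₀, le_refl 1⟩
  filter_upwards [hmem] with s hs
  have h1 : (∫⁻ z in E s, H z) = μ (E s) := (hμs (E s) (hEmeas s) (hEsub s)).symm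
  calc (∫⁻ z in E s, H z) = μ (E s) := h1
    _ ≤ μ (E (u n₀)) := measure_mono (hEanti (u n₀) s hs.1.le)
    _ ≤ ε := hn₀.le

lemma maxMod_attained {f : ℂ → ℂ} (hf : DifferentiableOn ℂ f (ball (0:ℂ) 1)) {r : ℝ}
    (h0 : 0 < r) (h1 : r < 1) :
    ∃ z : ℂ, z ∈ sphere (0:ℂ) r ∧ maxMod f r = ‖f z‖ := by
  have hcont : ContinuousOn (fun z => ‖f z‖) (sphere (0:ℂ) r) :=
    continuous_norm.comp_continuousOn (hf.continuousOn.mono (Metric.sphere_subset_ball h1))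
  obtain ⟨z, hz, hsup⟩ := (isCompact_sphere (0:ℂ) r).exists_sSup_image_eq
    (NormedSpace.sphere_nonempty.2 h0.le) hcont
  exact ⟨z, hz, hsup⟩

lemma maxMod_nonneg {f : ℂ → ℂ} (hf : DifferentiableOn ℂ f (ball (0:ℂ) 1)) {r : ℝ}
    (h0 : 0 < r) (h1 : r < 1) : 0 ≤ maxMod f r := by
  obtain ⟨z, _, hz⟩ := maxMod_attained hf h0 h1
  rw [hz]; exact norm_nonneg _

lemma le_maxMod {f : ℂ → ℂ} (hf : DifferentiableOn ℂ f (ball (0:ℂ) 1)) {r : ℝ}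
    (h0 : 0 < r) (h1 : r < 1) {x : ℂ} (hx : x ∈ ball (0:ℂ) r) :
    ‖f x‖ ≤ maxMod f r := by
  have hcont : ContinuousOn (fun z => ‖f z‖) (sphere (0:ℂ) r) :=
    continuous_norm.comp_continuousOn (hf.continuousOn.mono (Metric.sphere_subset_ball h1))
  have hbdd : BddAbove ((fun z => ‖f z‖) '' sphere (0:ℂ) r) :=
    ((isCompact_sphere (0:ℂ) r).image_of_continuousOn hcont).bddAbove
  have hfr : ∀ z ∈ frontier (ball (0:ℂ) r), ‖f z‖ ≤ maxMod f r := by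
    intro z hz
    rw [frontier_ball _ h0.ne'] at hz
    exact le_csSup hbdd ⟨z, hz, rfl⟩
  have hball : ball (0:ℂ) r ⊆ ball (0:ℂ) 1 := ball_subset_ball h1.le
  have hd : DiffContOnCl ℂ f (ball (0:ℂ) r) := by
    constructor
    · exact hf.mono hball
    · rw [closure_ball _ h0.ne']
      exact hf.continuousOn.mono (closedBall_subset_ball h1)
  have := Complex.norm_le_of_forall_mem_frontier_norm_le isBounded_ball hd hfr
    (subset_closure hx)
  simpa using this

lemma rpow_ratio {b c : ℝ} (hb : 0 < b) (h1 : b ≤ c) (h2 : c ≤ 6 * b) (α : ℝ) :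
    b ^ α ≤ 6 ^ |α| * c ^ α := by
  have hc : 0 < c := lt_of_lt_of_le hb h1
  rcases le_or_gt 0 α with hα | hα
  · rw [abs_of_nonneg hα]
    calc b ^ α ≤ c ^ α := Real.rpow_le_rpow hb.le h1 hα
      _ ≤ 6 ^ α * c ^ α := le_mul_of_one_le_left (Real.rpow_nonneg hc.le _)
          (Real.one_le_rpow (by norm_num) hα)
  · rw [abs_of_neg hα]
    have h3 : (6 * b) ^ α ≤ c ^ α := Real.rpow_le_rpow_of_nonpos hc h2 hα.le
    have h4 : (6:ℝ) ^ α * b ^ α ≤ c ^ α := by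
      rw [← Real.mul_rpow (by norm_num) hb.le]; exact h3
    have h5 : (6:ℝ) ^ (-α) * ((6:ℝ) ^ α * b ^ α) ≤ (6:ℝ) ^ (-α) * c ^ α :=
      mul_le_mul_of_nonneg_left h4 (Real.rpow_nonneg (by norm_num) _)
    calc b ^ α = (6:ℝ) ^ (-α) * ((6:ℝ) ^ α * b ^ α) := by
          rw [← mul_assoc, ← Real.rpow_add (by norm_num : (0:ℝ) < 6)]
          norm_num
      _ ≤ (6:ℝ) ^ (-α) * c ^ α := h5

/-- if a conformal `f` is in `A_α^p(𝔻)`, then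
`(1-r)·M(r)^{p/(α+2)} → 0` and `(1-r)·ψ(r)^{p/(2(α+2))} → 0` as `r → 1⁻`. -/
theorem tendsto_zero_of_memBergman (f : ℂ → ℂ) (hf : IsConformalOnDisk f)
    (p α : ℝ) (hp : 0 < p) (hα : -1 < α) (hB : MemBergman f p α) :
    Filter.Tendsto (fun r : ℝ => (1 - r) * maxMod f r ^ (p / (α + 2)))
      (nhdsWithin (1:ℝ) (Set.Iio 1)) (nhds 0) ∧
    Filter.Tendsto (fun r : ℝ => (1 - r) * psiArea f r ^ (p / (2 * (α + 2))))
      (nhdsWithin (1:ℝ) (Set.Iio 1)) (nhds 0) := by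
  obtain ⟨hinj, hd⟩ := hf
  have hα2 : (0:ℝ) < α + 2 := by linarith
  obtain ⟨C, hC, hsubm⟩ := submean p hp
  set T : ℝ → ℝ≥0∞ := fun s => ∫⁻ z in ball (0:ℂ) 1 \ closedBall (0:ℂ) s,
    ENNReal.ofReal (‖f z‖ ^ p * (1 - ‖z‖ ^ 2) ^ α) with hT
  have htail : Tendsto T (nhdsWithin (1:ℝ) (Set.Iio 1)) (nhds 0) := tail_tendsto hd hp hB
  have hTfin : ∀ s, T s ≠ ⊤ := by
    intro s
    refine (lt_of_le_of_lt (lintegral_mono_set diff_subset) hB).ne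
  set κ : ℝ → ℝ := fun r => (3 * r - 1) / 2 with hκdef
  have hκ : Tendsto κ (nhdsWithin (1:ℝ) (Set.Iio 1)) (nhdsWithin (1:ℝ) (Set.Iio 1)) := by
    apply tendsto_nhdsWithin_of_tendsto_nhds_of_eventually_within
    · have hcont : Continuous κ := by fun_prop
      have : κ 1 = 1 := by norm_num [hκdef]
      exact (hcont.tendsto' 1 1 this).mono_left nhdsWithin_le_nhds
    · filter_upwards [self_mem_nhdsWithin] with r hr
      have : r < 1 := hr
      simp only [hκdef, Set.mem_Iio]
      linarith
  have hT0 : Tendsto (fun r => (T (κ r)).toReal) (nhdsWithin (1:ℝ) (Set.Iio 1)) (nhds 0) := by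
    have h1 : Tendsto (fun r => T (κ r)) (nhdsWithin (1:ℝ) (Set.Iio 1)) (nhds 0) :=
      htail.comp hκ
    have h2 := (ENNReal.tendsto_toReal (by simp : (0:ℝ≥0∞) ≠ ⊤)).comp h1
    exact h2
  set C₃ : ℝ := 2 ^ (α + 2) * C * 6 ^ |α| with hC₃
  have hC₃0 : 0 < C₃ := by positivity
  -- the key estimate
  have KEY : ∀ᶠ r in nhdsWithin (1:ℝ) (Set.Iio 1),
      (1 - r) ^ (α + 2) * maxMod f r ^ p ≤ C₃ * (T (κ r)).toReal := by
    filter_upwards [Ioo_mem_nhdsLT_of_mem (show (1:ℝ) ∈ Set.Ioc (1/2) 1 by norm_num)]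
      with r hr
    obtain ⟨hr2, hr1⟩ := hr
    have hr0 : (0:ℝ) < r := by linarith
    set δ : ℝ := (1 - r) / 2 with hδdef
    have hδ0 : 0 < δ := by simp only [hδdef]; linarith
    obtain ⟨z, hzs, hzM⟩ := maxMod_attained hd hr0 hr1
    have hzabs : ‖z‖ = r := by
      rw [mem_sphere_iff_norm, sub_zero] at hzs
      exact hzs
    -- submean estimate
    have hballsub : ball z (1 - r) ⊆ ball (0:ℂ) 1 := by
      apply ball_subset_ball'
      have hdz : dist z 0 = r := by rw [Complex.dist_eq, sub_zero, hzabs]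
      rw [hdz]; linarith
    have hδlt : δ < 1 - r := by simp only [hδdef]; linarith
    have hskey := hsubm f z (1 - r) δ hδ0 hδlt (hd.mono hballsub)
    -- facts about points of ball z δ
    have hwfacts : ∀ w ∈ ball z δ, κ r < ‖w‖ ∧ ‖w‖ < (1 + r) / 2 := by
      intro w hw
      rw [mem_ball, Complex.dist_eq] at hw
      have h1 : ‖w‖ ≤ ‖z‖ + ‖w - z‖ := by
        calc ‖w‖ = ‖z + (w - z)‖ := by ring_nf
          _ ≤ _ := norm_add_le _ _
      have h2 : ‖z‖ - ‖w - z‖ ≤ ‖w‖ := by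
        have h2' : ‖z‖ ≤ ‖w‖ + ‖z - w‖ := by
          calc ‖z‖ = ‖w + (z - w)‖ := by ring_nf
            _ ≤ _ := norm_add_le _ _
        have h3 : ‖z - w‖ = ‖w - z‖ := norm_sub_rev z w
        linarith
      constructor
      · simp only [hκdef]
        rw [hzabs] at h2
        simp only [hδdef] at hw
        linarith
      · rw [hzabs] at h1
        simp only [hδdef] at hw
        linarith
    -- the set inclusion
    have hDsub : ball z δ ⊆ ball (0:ℂ) 1 \ closedBall (0:ℂ) (κ r) := by
      intro w hw
      obtain ⟨hw1, hw2⟩ := hwfacts w hw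
      constructor
      · rw [mem_ball, Complex.dist_eq, sub_zero]
        linarith
      · rw [mem_closedBall, Complex.dist_eq, sub_zero]
        push_neg
        exact hw1
    -- pointwise weight bound on ball z δ
    have hptwise : ∀ w ∈ ball z δ, ‖f w‖ ^ p ≤
        6 ^ |α| * δ ^ (-α) * (‖f w‖ ^ p * (1 - ‖w‖ ^ 2) ^ α) := by
      intro w hw
      obtain ⟨hw1, hw2⟩ := hwfacts w hw
      have haw : 0 ≤ ‖w‖ := norm_nonneg w
      have hb1 : δ ≤ 1 - ‖w‖ ^ 2 := by
        have h1 : ‖w‖ < 1 := by linarith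
        have h2 : δ ≤ 1 - ‖w‖ := by
          simp only [hδdef]; linarith
        nlinarith
      have hb2 : 1 - ‖w‖ ^ 2 ≤ 6 * δ := by
        have h1 : 1 - ‖w‖ ≤ 3 * δ := by
          simp only [hδdef, hκdef] at *
          linarith
        nlinarith
      have hrr := rpow_ratio hδ0 hb1 hb2 α
      -- δ^α ≤ 6^|α| (1-|w|²)^α ; multiply by δ^{-α} |f w|^p
      have h3 : (1:ℝ) ≤ 6 ^ |α| * δ ^ (-α) * (1 - ‖w‖ ^ 2) ^ α := by
        have h4 : δ ^ (-α) * δ ^ α = 1 := by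
          rw [← Real.rpow_add hδ0]; norm_num
        calc (1:ℝ) = δ ^ (-α) * δ ^ α := h4.symm
          _ ≤ δ ^ (-α) * (6 ^ |α| * (1 - ‖w‖ ^ 2) ^ α) := by
              apply mul_le_mul_of_nonneg_left hrr (Real.rpow_nonneg hδ0.le _)
          _ = 6 ^ |α| * δ ^ (-α) * (1 - ‖w‖ ^ 2) ^ α := by ring
      calc ‖f w‖ ^ p = ‖f w‖ ^ p * 1 := by ring
        _ ≤ ‖f w‖ ^ p * (6 ^ |α| * δ ^ (-α) * (1 - ‖w‖ ^ 2) ^ α) := by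
            apply mul_le_mul_of_nonneg_left h3 (Real.rpow_nonneg (norm_nonneg _) _)
        _ = 6 ^ |α| * δ ^ (-α) * (‖f w‖ ^ p * (1 - ‖w‖ ^ 2) ^ α) := by
            ring
    -- bound the integral by the tail
    have hIbound : (∫ w in ball z δ, ‖f w‖ ^ p) ≤
        6 ^ |α| * δ ^ (-α) * (T (κ r)).toReal := by
      have hcont2 : ContinuousOn (fun w => ‖f w‖ ^ p) (ball z δ) := by
        apply ContinuousOn.rpow_const
        · exact continuous_norm.comp_continuousOn
            (hd.continuousOn.mono ((ball_subset_ball hδlt.le).trans hballsub))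
        · exact fun x _ => Or.inr hp.le
      have heq : (∫ w in ball z δ, ‖f w‖ ^ p) =
          (∫⁻ w in ball z δ, ENNReal.ofReal (‖f w‖ ^ p)).toReal := by
        rw [MeasureTheory.integral_eq_lintegral_of_nonneg_ae]
        · exact ae_of_all _ (fun w => Real.rpow_nonneg (norm_nonneg _) _)
        · exact hcont2.aestronglyMeasurable measurableSet_ball
      rw [heq]
      have hlin : (∫⁻ w in ball z δ, ENNReal.ofReal (‖f w‖ ^ p)) ≤
          ENNReal.ofReal (6 ^ |α| * δ ^ (-α)) * T (κ r) := by
        calc (∫⁻ w in ball z δ, ENNReal.ofReal (‖f w‖ ^ p))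
            ≤ ∫⁻ w in ball z δ, ENNReal.ofReal (6 ^ |α| * δ ^ (-α)) *
              ENNReal.ofReal (‖f w‖ ^ p * (1 - ‖w‖ ^ 2) ^ α) := by
              apply lintegral_mono_ae
              filter_upwards [ae_restrict_mem measurableSet_ball] with w hw
              rw [← ENNReal.ofReal_mul (by positivity)]
              exact ENNReal.ofReal_le_ofReal (hptwise w hw)
          _ = ENNReal.ofReal (6 ^ |α| * δ ^ (-α)) *
              ∫⁻ w in ball z δ, ENNReal.ofReal
                (‖f w‖ ^ p * (1 - ‖w‖ ^ 2) ^ α) :=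
              lintegral_const_mul' _ _ ENNReal.ofReal_ne_top
          _ ≤ ENNReal.ofReal (6 ^ |α| * δ ^ (-α)) * T (κ r) := by
              apply mul_le_mul_right
              exact lintegral_mono_set hDsub
      calc (∫⁻ w in ball z δ, ENNReal.ofReal (‖f w‖ ^ p)).toReal
          ≤ (ENNReal.ofReal (6 ^ |α| * δ ^ (-α)) * T (κ r)).toReal := by
            apply ENNReal.toReal_mono _ hlin
            exact ENNReal.mul_ne_top ENNReal.ofReal_ne_top (hTfin _)
        _ = 6 ^ |α| * δ ^ (-α) * (T (κ r)).toReal := by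
            rw [ENNReal.toReal_mul, ENNReal.toReal_ofReal (by positivity)]
    -- combine
    have hfz : ‖f z‖ ^ p ≤ C / δ ^ 2 * (6 ^ |α| * δ ^ (-α) * (T (κ r)).toReal) := by
      calc ‖f z‖ ^ p ≤ C / δ ^ 2 * ∫ w in ball z δ, ‖f w‖ ^ p := hskey
        _ ≤ C / δ ^ 2 * (6 ^ |α| * δ ^ (-α) * (T (κ r)).toReal) := by
            apply mul_le_mul_of_nonneg_left hIbound (by positivity)
    -- now rpow algebra
    have h1r : (1:ℝ) - r = 2 * δ := by simp only [hδdef]; ring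
    rw [hzM, h1r]
    have e1 : (2 * δ) ^ (α + 2) = 2 ^ (α + 2) * δ ^ (α + 2) :=
      Real.mul_rpow (by norm_num) hδ0.le
    have e2 : δ ^ (α + 2) = δ ^ α * δ ^ (2:ℝ) := Real.rpow_add hδ0 α 2
    have e3 : (δ:ℝ) ^ (2:ℕ) = δ ^ (2:ℝ) := by
      rw [← Real.rpow_natCast δ 2]; norm_num
    have e4 : δ ^ (-α) * δ ^ α = 1 := by
      rw [← Real.rpow_add hδ0]; norm_num
    calc (2 * δ) ^ (α + 2) * ‖f z‖ ^ p
        ≤ (2 * δ) ^ (α + 2) * (C / δ ^ 2 * (6 ^ |α| * δ ^ (-α) * (T (κ r)).toReal)) := by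
          apply mul_le_mul_of_nonneg_left hfz (Real.rpow_nonneg (by positivity) _)
      _ = C₃ * (T (κ r)).toReal := by
          rw [e1, e2, e3, hC₃]
          have h5 : δ ^ (2:ℝ) ≠ 0 := (Real.rpow_pos_of_pos hδ0 _).ne'
          have e4' : δ ^ α * δ ^ (-α) = 1 := by rw [mul_comm]; exact e4
          calc 2 ^ (α + 2) * (δ ^ α * δ ^ (2:ℝ)) *
              (C / δ ^ (2:ℝ) * (6 ^ |α| * δ ^ (-α) * (T (κ r)).toReal))
              = 2 ^ (α + 2) * C * 6 ^ |α| * (T (κ r)).toReal *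
                ((δ ^ α * δ ^ (-α)) * (δ ^ (2:ℝ) / δ ^ (2:ℝ))) := by
                simp only [div_eq_mul_inv]; ring
            _ = 2 ^ (α + 2) * C * 6 ^ |α| * (T (κ r)).toReal := by
                rw [e4', div_self h5]; ring
  -- part 1
  have part1 : Tendsto (fun r : ℝ => (1 - r) * maxMod f r ^ (p / (α + 2)))
      (nhdsWithin (1:ℝ) (Set.Iio 1)) (nhds 0) := by
    have hg : Tendsto (fun r => (C₃ * (T (κ r)).toReal) ^ (1 / (α + 2)))
        (nhdsWithin (1:ℝ) (Set.Iio 1)) (nhds 0) := by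
      have h1 : Tendsto (fun r => C₃ * (T (κ r)).toReal)
          (nhdsWithin (1:ℝ) (Set.Iio 1)) (nhds (C₃ * 0)) := hT0.const_mul C₃
      rw [mul_zero] at h1
      have h2 := (Real.continuousAt_rpow_const 0 (1 / (α + 2))
        (Or.inr (by positivity))).tendsto.comp h1
      rw [Function.comp_def] at h2
      rwa [Real.zero_rpow (by positivity : (0:ℝ) < 1 / (α + 2)).ne'] at h2
    apply squeeze_zero' ?_ ?_ hg
    · filter_upwards [Ioo_mem_nhdsLT_of_mem (show (1:ℝ) ∈ Set.Ioc (1/2) 1 by norm_num)]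
        with r hr
      have hr0 : (0:ℝ) < r := by linarith [hr.1]
      exact mul_nonneg (by linarith [hr.2]) (Real.rpow_nonneg (maxMod_nonneg hd hr0 hr.2) _)
    · filter_upwards [KEY, Ioo_mem_nhdsLT_of_mem (show (1:ℝ) ∈ Set.Ioc (1/2) 1 by norm_num)]
        with r hK hr
      have hr0 : (0:ℝ) < r := by linarith [hr.1]
      have hM0 : 0 ≤ maxMod f r := maxMod_nonneg hd hr0 hr.2
      have h1r0 : (0:ℝ) ≤ 1 - r := by linarith [hr.2]
      have heq : (1 - r) * maxMod f r ^ (p / (α + 2))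
          = ((1 - r) ^ (α + 2) * maxMod f r ^ p) ^ (1 / (α + 2)) := by
        rw [Real.mul_rpow (Real.rpow_nonneg h1r0 _) (Real.rpow_nonneg hM0 _),
          ← Real.rpow_mul h1r0, ← Real.rpow_mul hM0]
        rw [mul_one_div, div_self hα2.ne', Real.rpow_one, mul_one_div]
      rw [heq]
      exact Real.rpow_le_rpow (by positivity) hK (by positivity)
  refine ⟨part1, ?_⟩
  -- part 2
  have hψ : ∀ᶠ r in nhdsWithin (1:ℝ) (Set.Iio 1),
      psiArea f r ≤ Real.pi * maxMod f r ^ (2:ℕ) := by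
    filter_upwards [Ioo_mem_nhdsLT_of_mem (show (1:ℝ) ∈ Set.Ioc (1/2) 1 by norm_num)]
      with r hr
    have hr0 : (0:ℝ) < r := by linarith [hr.1]
    have hM0 : 0 ≤ maxMod f r := maxMod_nonneg hd hr0 hr.2
    have himg : f '' ball (0:ℂ) r ⊆ closedBall (0:ℂ) (maxMod f r) := by
      rintro _ ⟨x, hx, rfl⟩
      rw [mem_closedBall, Complex.dist_eq, sub_zero]
      exact le_maxMod hd hr0 hr.2 hx
    have hvol : volume (f '' ball (0:ℂ) r)
        ≤ ENNReal.ofReal (maxMod f r) ^ 2 * NNReal.pi := by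
      rw [← Complex.volume_closedBall 0 (maxMod f r)]
      exact measure_mono himg
    have hne : (ENNReal.ofReal (maxMod f r) ^ 2 * (NNReal.pi : ℝ≥0∞)) ≠ ⊤ :=
      ENNReal.mul_ne_top (by simp [ENNReal.pow_ne_top ENNReal.ofReal_ne_top])
        ENNReal.coe_ne_top
    calc psiArea f r ≤ (ENNReal.ofReal (maxMod f r) ^ 2 * (NNReal.pi : ℝ≥0∞)).toReal :=
          ENNReal.toReal_mono hne hvol
      _ = Real.pi * maxMod f r ^ (2:ℕ) := by
          rw [ENNReal.toReal_mul, ENNReal.toReal_pow, ENNReal.toReal_ofReal hM0,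
            ENNReal.coe_toReal, NNReal.coe_real_pi]
          ring
  have hg2 : Tendsto (fun r => Real.pi ^ (p / (2 * (α + 2))) *
      ((1 - r) * maxMod f r ^ (p / (α + 2))))
      (nhdsWithin (1:ℝ) (Set.Iio 1)) (nhds 0) := by
    have := part1.const_mul (Real.pi ^ (p / (2 * (α + 2))))
    rwa [mul_zero] at this
  apply squeeze_zero' ?_ ?_ hg2
  · filter_upwards [self_mem_nhdsWithin] with r hr
    have : r < 1 := hr
    apply mul_nonneg (by linarith)
    exact Real.rpow_nonneg ENNReal.toReal_nonneg _
  · filter_upwards [hψ, Ioo_mem_nhdsLT_of_mem (show (1:ℝ) ∈ Set.Ioc (1/2) 1 by norm_num)]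
      with r hψr hr
    have hr0 : (0:ℝ) < r := by linarith [hr.1]
    have hM0 : 0 ≤ maxMod f r := maxMod_nonneg hd hr0 hr.2
    have h1r0 : (0:ℝ) ≤ 1 - r := by linarith [hr.2]
    have hψ0 : (0:ℝ) ≤ psiArea f r := ENNReal.toReal_nonneg
    have step1 : psiArea f r ^ (p / (2 * (α + 2)))
        ≤ (Real.pi * maxMod f r ^ (2:ℕ)) ^ (p / (2 * (α + 2))) :=
      Real.rpow_le_rpow hψ0 hψr (by positivity)
    have step2 : (Real.pi * maxMod f r ^ (2:ℕ)) ^ (p / (2 * (α + 2)))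
        = Real.pi ^ (p / (2 * (α + 2))) * maxMod f r ^ (p / (α + 2)) := by
      rw [Real.mul_rpow Real.pi_nonneg (by positivity)]
      congr 1
      rw [← Real.rpow_natCast (maxMod f r) 2, ← Real.rpow_mul hM0]
      congr 1
      push_cast
      field_simp
    calc (1 - r) * psiArea f r ^ (p / (2 * (α + 2)))
        ≤ (1 - r) * ((Real.pi * maxMod f r ^ (2:ℕ)) ^ (p / (2 * (α + 2)))) :=
          mul_le_mul_of_nonneg_left step1 h1r0
      _ = Real.pi ^ (p / (2 * (α + 2))) * ((1 - r) * maxMod f r ^ (p / (α + 2))) := by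
          rw [step2]; ring
end
end

section
/- For every z in the open unit disk 𝔻 of ℂ, Re[ (Log(2e/(1-z)))^{-1/2} − (1/2)·(Log(2e/(1-z)))^{-3/2} ] > 0, where Log is the principal branch of the complex logarithm and w^{-1/2}, w^{-3/2} are defined using the principal branch of the square root (these branches are well defined here since 2e/(1-z) lies in the half-plane {Re w > e}, so Log(2e/(1-z)) lies in {Re w > 1}). -/
open MeasureTheory Filter Set
open scoped ENNReal Real

noncomputable section

/-- for every `z ∈ 𝔻`,
`Re[(Log(2e/(1-z)))^{-1/2} - (1/2)(Log(2e/(1-z)))^{-3/2}] > 0`, where `Log` and the powers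
are taken with the principal branch. -/
theorem re_pos_log_powers (z : ℂ) (hz : z ∈ Metric.ball (0:ℂ) 1) :
    0 < ((Complex.log (((2 * Real.exp 1 : ℝ) : ℂ) / (1 - z))) ^ (-(1/2) : ℂ)
      - (1/2 : ℂ) * (Complex.log (((2 * Real.exp 1 : ℝ) : ℂ) / (1 - z))) ^ (-(3/2) : ℂ)).re := by
  have hzlt : ‖z‖ < 1 := by simpa [Complex.dist_eq] using hz
  have habs2 : ‖1 - z‖ < 2 := by
    calc ‖1 - z‖ = ‖(1:ℂ) - z‖ := rfl
    _ ≤ ‖(1:ℂ)‖ + ‖z‖ := norm_sub_le _ _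
    _ < 2 := by simp only [norm_one]; linarith
  have habs0 : 0 < ‖1 - z‖ := by
    rcases eq_or_ne (1 - z) 0 with h | h
    · exfalso; have : z = 1 := by linear_combination -h
      simp [this] at hzlt
    · exact (norm_pos_iff.mpr h)
  have hne : (1 : ℂ) - z ≠ 0 := by
    intro h; simp [h] at habs0
  set c : ℂ := ((2 * Real.exp 1 : ℝ) : ℂ) with hc
  have hce : ‖c‖ = 2 * Real.exp 1 := by
    rw [hc, Complex.norm_real, Real.norm_eq_abs, abs_of_pos]; positivity
  have habs : Real.exp 1 < ‖c / (1 - z)‖ := by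
    rw [norm_div, hce]
    rw [lt_div_iff₀ habs0]
    nlinarith [Real.exp_pos 1]
  set L := Complex.log (c / (1 - z)) with hLdef
  clear_value L
  have hL : 1 < L.re := by
    rw [hLdef, Complex.log_re]
    calc (1:ℝ) = Real.log (Real.exp 1) := (Real.log_exp 1).symm
    _ < _ := Real.log_lt_log (Real.exp_pos 1) habs
  have hLne : L ≠ 0 := by
    intro h; rw [h] at hL; simp at hL; linarith
  set u := Complex.exp ((1/2 : ℂ) * Complex.log L) with hu
  clear_value u
  have hu2 : u ^ 2 = L := by
    rw [hu, sq, ← Complex.exp_add, ← two_mul,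
      show (2:ℂ) * ((1/2:ℂ) * Complex.log L) = Complex.log L by ring]
    exact Complex.exp_log hLne
  have hune : u ≠ 0 := hu ▸ Complex.exp_ne_zero _
  set a := u.re with ha
  set b := u.im with hb
  clear_value a b
  have hab : 1 < a ^ 2 - b ^ 2 := by
    have : (u ^ 2).re = a ^ 2 - b ^ 2 := by
      rw [pow_two, Complex.mul_re, ← ha, ← hb]; ring
    rw [hu2] at this; linarith
  have hanonneg : 0 ≤ a := by
    have harg : ((1/2:ℂ) * Complex.log L).im = Complex.arg L / 2 := by
      simp [Complex.mul_im, Complex.log_im]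
      ring
    rw [ha, hu, Complex.exp_re, harg]
    apply mul_nonneg (Real.exp_pos _).le
    apply Real.cos_nonneg_of_mem_Icc
    constructor
    · linarith [Complex.neg_pi_lt_arg L, Real.pi_pos]
    · linarith [Complex.arg_le_pi L, Real.pi_pos]
  have hagt : 1 < a := by nlinarith
  -- rewrite cpow in terms of u
  have h1 : (L : ℂ) ^ (-(1/2) : ℂ) = u⁻¹ := by
    rw [Complex.cpow_def_of_ne_zero hLne, hu, ← Complex.exp_neg]
    congr 1
    ring
  have h3 : (L : ℂ) ^ (-(3/2) : ℂ) = (u ^ 3)⁻¹ := by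
    rw [Complex.cpow_def_of_ne_zero hLne, hu, ← Complex.exp_nat_mul, ← Complex.exp_neg]
    congr 1
    push_cast
    ring
  rw [h1, h3]
  have hE : u⁻¹ - (1/2 : ℂ) * (u ^ 3)⁻¹ = (2 * u ^ 2 - 1) / (2 * u ^ 3) := by
    field_simp
  rw [hE]
  have hn : (0:ℝ) < a ^ 2 + b ^ 2 := by nlinarith
  have hnormSq : Complex.normSq (2 * u ^ 3) = 4 * (a^2 + b^2)^3 := by
    rw [Complex.normSq_apply]
    simp only [Complex.mul_re, Complex.mul_im, pow_succ, pow_zero, one_mul,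
      Complex.re_ofNat, Complex.im_ofNat, ← ha, ← hb]
    ring
  have h2re : (u^2).re = a^2 - b^2 := by
    rw [pow_two, Complex.mul_re, ← ha, ← hb]; ring
  have h2im : (u^2).im = 2*a*b := by
    rw [pow_two, Complex.mul_im, ← ha, ← hb]; ring
  have h3re : (u^3).re = a^3 - 3*a*b^2 := by
    rw [pow_succ, pow_two, Complex.mul_re, Complex.mul_re, Complex.mul_im, ← ha, ← hb]; ring
  have h3im : (u^3).im = 3*a^2*b - b^3 := by
    rw [pow_succ, pow_two, Complex.mul_im, Complex.mul_re, Complex.mul_im, ← ha, ← hb]; ring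
  have hre : ((2 * u ^ 2 - 1) / (2 * u ^ 3)).re
      = (2*a) * (2*(a^2+b^2)^2 - a^2 + 3*b^2) / (4 * (a^2+b^2)^3) := by
    rw [Complex.div_re, hnormSq]
    simp only [Complex.sub_re, Complex.sub_im, Complex.mul_re, Complex.mul_im,
      Complex.one_re, Complex.one_im, Complex.re_ofNat, Complex.im_ofNat,
      h2re, h2im, h3re, h3im]
    rw [← add_div]
    congr 1
    ring
  rw [hre]
  apply div_pos
  · have h2 : 0 < 2*(a^2+b^2)^2 - a^2 + 3*b^2 := by
      nlinarith [hagt, sq_nonneg b, sq_nonneg (a*b), sq_nonneg (a^2-1)]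
    have : 0 < 2*a := by linarith
    exact mul_pos this h2
  · positivity
end
end
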